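/- Let A = kQ/I be a graded quadratic monomial algebra and e a sum of vertex idempotents, with 1 − e the complementary sum. Then there are isomorphisms of dg algebras: (1) A_e ≅ ((1−e)A^!(1−e))^!, and (2) eAe ≅ ((A^!)_{1−e})^!. -/

import Mathlib

universe w

/-- A graded quiver with a set of quadratic monomial relations: the data `(Q, I)`
presenting a graded quadratic monomial algebra `A = kQ/⟨I⟩` (viewed as a dg algebra
with zero differential).  `rel a b` means that the length-two path `ab` lies in `I`;
`deg` is the grading of the arrows. -/
structure QuadData : Type (w + 1) where
  V : Type w
  E : Type w
  src : E → V
  tgt : E → V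
  deg : E → ℤ
  rel : E → E → Prop
  rel_comp : ∀ a b, rel a b → tgt a = src b

namespace QuadData

variable (Q : QuadData)

/-- A list of arrows is composable (i.e. is a path). -/
def Composable (l : List Q.E) : Prop := l.Chain' fun a b => Q.tgt a = Q.src b

/-- No two consecutive arrows of the path form a relation. -/
def AvoidsRel (l : List Q.E) : Prop := l.Chain' fun a b => ¬ Q.rel a b

/-- All consecutive pairs of arrows of the path are relations. -/
def AllRel (l : List Q.E) : Prop := l.Chain' fun a b => Q.rel a b

end QuadData

namespace QuadData

variable (Q : QuadData)

/-- There is a cyclic path `α₁ ⋯ αₙ` with `αᵢαᵢ₊₁ ∈ I` for all `i ∈ ℤ/nℤ`. -/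
def RelCycle : Prop :=
  ∃ (l : List Q.E) (h : l ≠ []), Q.AllRel l ∧ Q.rel (l.getLast h) (l.head h)

/-- There is a cyclic path `α₁ ⋯ αₙ` with `αᵢαᵢ₊₁ ∉ I` for all `i ∈ ℤ/nℤ`. -/
def RelFreeCycle : Prop :=
  ∃ (l : List Q.E) (h : l ≠ []), Q.Composable l ∧ Q.AvoidsRel l ∧
    Q.tgt (l.getLast h) = Q.src (l.head h) ∧ ¬ Q.rel (l.getLast h) (l.head h)

/-- Combinatorial characterisation of homological smoothness of `kQ/⟨I⟩`:
there is no cyclic path all of whose consecutive pairs are relations. -/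
def SmoothP : Prop := ¬ Q.RelCycle

/-- Combinatorial characterisation of properness of `kQ/⟨I⟩`:
there is no relation-free cyclic path. -/
def ProperP : Prop := ¬ Q.RelFreeCycle

/-- `A = kQ/⟨I⟩` is homologically smooth iff its minimal bimodule resolution, whose
terms are indexed by the paths all of whose consecutive pairs lie in `I`, is finite. -/
def IsSmoothC : Prop := Finite {l : List Q.E // Q.AllRel l}

/-- `A = kQ/⟨I⟩` (with zero differential) is proper iff its total cohomology, i.e.
`A` itself, is finite dimensional over `k`; a basis of `A` is given by the
relation-avoiding paths. -/
def IsProperC : Prop := Finite {l : List Q.E // Q.Composable l ∧ Q.AvoidsRel l}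

/-- The graded quadratic dual `A⁽ᴵ⁾ = kQᵒᵖ/⟨I^⊥⟩`, where
`I^⊥ = {βᵒᵖαᵒᵖ : αβ ∉ I}` and `|αᵒᵖ| = 1 - |α|`. -/
@[reducible] def dual : QuadData where
  V := Q.V
  E := Q.E
  src := Q.tgt
  tgt := Q.src
  deg := fun e => 1 - Q.deg e
  rel := fun x y => Q.tgt y = Q.src x ∧ ¬ Q.rel y x
  rel_comp := fun _ _ h => h.1.symm

/-- An arrow of the quiver of `A_e` (for `supp` the support of the idempotent `e`):
a path `α₁ ⋯ αₛ` all of whose consecutive pairs are relations passing through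
vertices of `supp`, with endpoints outside `supp`. -/
structure CutArrow (supp : Set Q.V) where
  letters : List Q.E
  ne : letters ≠ []
  chain : letters.Chain' fun a b => Q.rel a b ∧ Q.src b ∈ supp
  src_out : Q.src (letters.head ne) ∉ supp
  tgt_out : Q.tgt (letters.getLast ne) ∉ supp

/-- The graded quadratic monomial algebra `A_e` obtained by collapsing the relations
through the vertices in `supp`: vertices `Q₀ ∖ supp`, arrows `[α₁ ⋯ αₛ]` of degree
`Σ|αᵢ| - s + 1`, and relations `[α₁ ⋯ αₛ][β₁ ⋯ βₜ]` whenever `αₛβ₁ ∈ I`. -/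
@[reducible] def cut (supp : Set Q.V) : QuadData where
  V := {v : Q.V // v ∉ supp}
  E := Q.CutArrow supp
  src := fun p => ⟨Q.src (p.letters.head p.ne), p.src_out⟩
  tgt := fun p => ⟨Q.tgt (p.letters.getLast p.ne), p.tgt_out⟩
  deg := fun p => ((p.letters.map Q.deg).sum - p.letters.length) + 1
  rel := fun p q => Q.rel (p.letters.getLast p.ne) (q.letters.head q.ne)
  rel_comp := fun _ _ h => Subtype.ext (Q.rel_comp _ _ h)

/-- An arrow of the presentation of the idempotent subalgebra `eAe`:
a relation-avoiding path with endpoints in `supp` and interior outside `supp`. -/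
structure IdemArrow (supp : Set Q.V) where
  letters : List Q.E
  ne : letters ≠ []
  chain : letters.Chain' fun a b => Q.tgt a = Q.src b ∧ ¬ Q.rel a b ∧ Q.src b ∉ supp
  src_in : Q.src (letters.head ne) ∈ supp
  tgt_in : Q.tgt (letters.getLast ne) ∈ supp

/-- The idempotent subalgebra `eAe` as a graded quadratic monomial algebra. -/
@[reducible] def idem (supp : Set Q.V) : QuadData where
  V := {v : Q.V // v ∈ supp}
  E := Q.IdemArrow supp
  src := fun p => ⟨Q.src (p.letters.head p.ne), p.src_in⟩
  tgt := fun p => ⟨Q.tgt (p.letters.getLast p.ne), p.tgt_in⟩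
  deg := fun p => (p.letters.map Q.deg).sum
  rel := fun p q => Q.rel (p.letters.getLast p.ne) (q.letters.head q.ne)
  rel_comp := fun _ _ h => Subtype.ext (Q.rel_comp _ _ h)

/-- An isomorphism of presentations of graded quadratic monomial algebras: it
induces an isomorphism of the associated dg algebras (with zero differential). -/
structure Iso (Q₁ Q₂ : QuadData) where
  vEquiv : Q₁.V ≃ Q₂.V
  eEquiv : Q₁.E ≃ Q₂.E
  map_src : ∀ e, Q₂.src (eEquiv e) = vEquiv (Q₁.src e)
  map_tgt : ∀ e, Q₂.tgt (eEquiv e) = vEquiv (Q₁.tgt e)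
  map_deg : ∀ e, Q₂.deg (eEquiv e) = Q₁.deg e
  map_rel : ∀ a b, Q₁.rel a b ↔ Q₂.rel (eEquiv a) (eEquiv b)

/-- The conditions for `(Q, I)` to present a (graded) gentle algebra. -/
structure IsGentle (Q : QuadData) : Prop where
  finV : Finite Q.V
  finE : Finite Q.E
  src_two : ∀ a b c : Q.E, Q.src a = Q.src b → Q.src b = Q.src c → a = b ∨ b = c ∨ a = c
  tgt_two : ∀ a b c : Q.E, Q.tgt a = Q.tgt b → Q.tgt b = Q.tgt c → a = b ∨ b = c ∨ a = c
  rel_right : ∀ a b b', Q.rel a b → Q.rel a b' → b = b'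
  rel_left : ∀ a a' b, Q.rel a b → Q.rel a' b → a = a'
  nonrel_right : ∀ a b b', Q.tgt a = Q.src b → Q.tgt a = Q.src b' →
    ¬ Q.rel a b → ¬ Q.rel a b' → b = b'
  nonrel_left : ∀ a a' b, Q.tgt a = Q.src b → Q.tgt a' = Q.src b →
    ¬ Q.rel a b → ¬ Q.rel a' b → a = a'


set_option linter.dupNamespace false

variable {supp : Set Q.V}

private lemma rev_ne {α : Type*} {l : List α} (h : l ≠ []) : l.reverse ≠ [] := by simpa

private lemma sum_map_one_sub (f : Q.E → ℤ) (l : List Q.E) :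
    (l.map (fun e => 1 - f e)).sum = l.length - (l.map f).sum := by
  induction l with
  | nil => simp
  | cons a t ih => simp [ih]; ring

/-- Part 1, forward map. -/
def cutToIdem (p : Q.CutArrow supp) : Q.dual.IdemArrow suppᶜ where
  letters := p.letters.reverse
  ne := rev_ne p.ne
  chain := by
    rw [List.Chain', List.isChain_reverse]
    refine p.chain.imp ?_
    intro a b hab
    have h1 := Q.rel_comp _ _ hab.1
    exact ⟨h1.symm, fun h => h.2 hab.1, by simpa using h1 ▸ hab.2⟩
  src_in := by
    show Q.tgt _ ∈ suppᶜ
    rw [List.head_reverse]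
    exact p.tgt_out
  tgt_in := by
    show Q.src _ ∈ suppᶜ
    rw [List.getLast_reverse]
    exact p.src_out

/-- Part 1, inverse map. -/
def idemToCut (r : Q.dual.IdemArrow suppᶜ) : Q.CutArrow supp where
  letters := r.letters.reverse
  ne := rev_ne r.ne
  chain := by
    rw [List.Chain', List.isChain_reverse]
    refine r.chain.imp ?_
    intro a b hab
    have hrel : Q.rel b a := by
      by_contra hc
      exact hab.2.1 ⟨hab.1.symm, hc⟩
    refine ⟨hrel, ?_⟩
    have h1 : Q.src a = Q.tgt b := hab.1
    have h2 : Q.tgt b ∈ supp := by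
      have := hab.2.2
      simpa using this
    rw [h1]; exact h2
  src_out := by
    rw [List.head_reverse]
    exact r.tgt_in
  tgt_out := by
    rw [List.getLast_reverse]
    exact r.src_in

lemma CutArrow.ext' {Q' : QuadData} {s : Set Q'.V} {p q : Q'.CutArrow s}
    (h : p.letters = q.letters) : p = q := by
  cases p; cases q; cases h; rfl

lemma IdemArrow.ext' {Q' : QuadData} {s : Set Q'.V} {p q : Q'.IdemArrow s}
    (h : p.letters = q.letters) : p = q := by
  cases p; cases q; cases h; rfl

/-- Part 2, forward map. -/
def idemToCut' (p : Q.IdemArrow supp) : Q.dual.CutArrow suppᶜ where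
  letters := p.letters.reverse
  ne := rev_ne p.ne
  chain := by
    rw [List.Chain', List.isChain_reverse]
    refine p.chain.imp ?_
    intro a b hab
    refine ⟨⟨hab.1, hab.2.1⟩, ?_⟩
    show Q.tgt a ∉ supp
    have h1 : Q.tgt a = Q.src b := hab.1
    rw [h1]; exact hab.2.2
  src_out := by
    show ¬ (Q.tgt _ ∈ suppᶜ)
    rw [List.head_reverse]
    simpa using p.tgt_in
  tgt_out := by
    show ¬ (Q.src _ ∈ suppᶜ)
    rw [List.getLast_reverse]
    simpa using p.src_in

/-- Part 2, inverse map. -/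
def cutToIdem' (r : Q.dual.CutArrow suppᶜ) : Q.IdemArrow supp where
  letters := r.letters.reverse
  ne := rev_ne r.ne
  chain := by
    rw [List.Chain', List.isChain_reverse]
    refine r.chain.imp ?_
    intro a b hab
    refine ⟨hab.1.1, hab.1.2, ?_⟩
    have h1 : Q.tgt b = Q.src a := hab.1.1
    have h2 : Q.tgt b ∉ supp := hab.2
    rw [← h1]; exact h2
  src_in := by
    rw [List.head_reverse]
    simpa using r.tgt_out
  tgt_in := by
    rw [List.getLast_reverse]
    simpa using r.src_out

theorem cut_and_idem_via_quadratic_dual' (Q : QuadData) (supp : Set Q.V) :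
    Nonempty (QuadData.Iso (Q.cut supp) ((Q.dual.idem suppᶜ).dual)) ∧
    Nonempty (QuadData.Iso (Q.idem supp) ((Q.dual.cut suppᶜ).dual)) := by
  constructor
  · refine ⟨{
      vEquiv := Equiv.subtypeEquivRight (fun v => by simp)
      eEquiv := ⟨Q.cutToIdem, Q.idemToCut,
        fun p => CutArrow.ext' (by simp [cutToIdem, idemToCut]),
        fun r => IdemArrow.ext' (by simp [cutToIdem, idemToCut])⟩
      map_src := ?_
      map_tgt := ?_
      map_deg := ?_
      map_rel := ?_ }⟩
    · intro p
      apply Subtype.ext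
      show Q.src _ = Q.src _
      simp [cutToIdem, List.getLast_reverse]
    · intro p
      apply Subtype.ext
      show Q.tgt _ = Q.tgt _
      simp [cutToIdem, List.head_reverse]
    · intro p
      show 1 - ((p.letters.reverse.map (fun e => 1 - Q.deg e)).sum) = _
      rw [List.map_reverse, List.sum_reverse, sum_map_one_sub]
      show _ = ((p.letters.map Q.deg).sum - p.letters.length) + 1
      ring
    · intro a b
      simp only [Equiv.coe_fn_mk]
      show Q.rel _ _ ↔ (_ ∧ ¬ _)
      unfold cutToIdem
      dsimp only
      simp only [List.getLast_reverse, List.head_reverse, Subtype.mk.injEq]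
      constructor
      · intro h
        exact ⟨(Q.rel_comp _ _ h).symm, fun hh => hh.2 h⟩
      · rintro ⟨h1, h2⟩
        by_contra hc
        exact h2 ⟨h1.symm, hc⟩
  · refine ⟨{
      vEquiv := Equiv.subtypeEquivRight (fun v => by simp)
      eEquiv := ⟨Q.idemToCut', Q.cutToIdem',
        fun p => IdemArrow.ext' (by simp [cutToIdem', idemToCut']),
        fun r => CutArrow.ext' (by simp [cutToIdem', idemToCut'])⟩
      map_src := ?_
      map_tgt := ?_
      map_deg := ?_
      map_rel := ?_ }⟩
    · intro p
      apply Subtype.ext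
      show Q.src _ = Q.src _
      simp [idemToCut', List.getLast_reverse]
    · intro p
      apply Subtype.ext
      show Q.tgt _ = Q.tgt _
      simp [idemToCut', List.head_reverse]
    · intro p
      show 1 - (((p.letters.reverse.map (fun e => 1 - Q.deg e)).sum - p.letters.reverse.length) + 1) = _
      rw [List.map_reverse, List.sum_reverse, sum_map_one_sub, List.length_reverse]
      show _ = (p.letters.map Q.deg).sum
      ring
    · intro a b
      simp only [Equiv.coe_fn_mk]
      show Q.rel _ _ ↔ (_ ∧ ¬ _)
      unfold idemToCut'
      dsimp only
      simp only [List.getLast_reverse, List.head_reverse, Subtype.mk.injEq]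
      constructor
      · intro h
        exact ⟨(Q.rel_comp _ _ h).symm, fun hh => hh.2 h⟩
      · rintro ⟨h1, h2⟩
        by_contra hc
        exact h2 ⟨h1.symm, hc⟩

end QuadData

/-- Let `A = kQ/I` be a graded quadratic monomial algebra and `e` a
sum of vertex idempotents with support `supp` (so `1 - e` has support `suppᶜ`).  Then
there are isomorphisms of dg algebras
`A_e ≅ ((1-e) A^! (1-e))^!` and `eAe ≅ ((A^!)_{1-e})^!`. -/
theorem cut_and_idem_via_quadratic_dual (Q : QuadData) (supp : Set Q.V) :
    Nonempty (QuadData.Iso (Q.cut supp) ((Q.dual.idem suppᶜ).dual)) ∧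
    Nonempty (QuadData.Iso (Q.idem supp) ((Q.dual.cut suppᶜ).dual)) := by
  exact QuadData.cut_and_idem_via_quadratic_dual' Q supp
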